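/- For F(x) = |x|²/2 on ℝⁿ and the F-interpolation X_t = e^{−t}α_T + e^{−(T−t)}β_T between x and y (with α_T = (x − y e^{−T})/(1 − e^{−2T}), β_T = (y − x e^{−T})/(1 − e^{−2T})), the conserved quantity E_T(x,y) = |Ẋ_t|² − |X_t|² equals −4e^{−T}⟨α_T, β_T⟩ for every t ∈ [0,T]. -/

import Mathlib

/-- For `F(x) = |x|²/2`, the conserved quantity of the `F`-interpolation
`X_t = e^{-t} α_T + e^{-(T-t)} β_T` equals `-4 e^{-T} ⟨α_T, β_T⟩`. -/
theorem stmt_8 (n : ℕ) (x y : EuclideanSpace ℝ (Fin n)) (T : ℝ) (hT : 0 < T)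
    (α β : EuclideanSpace ℝ (Fin n))
    (hα : α = (1 - Real.exp (-2 * T))⁻¹ • (x - Real.exp (-T) • y))
    (hβ : β = (1 - Real.exp (-2 * T))⁻¹ • (y - Real.exp (-T) • x))
    (X X' : ℝ → EuclideanSpace ℝ (Fin n))
    (hX : X = fun t => Real.exp (-t) • α + Real.exp (-(T - t)) • β)
    (hX' : X' = fun t => -(Real.exp (-t) • α) + Real.exp (-(T - t)) • β) :
    ∀ t ∈ Set.Icc (0:ℝ) T,
      ‖X' t‖ ^ 2 - ‖X t‖ ^ 2 = -4 * Real.exp (-T) * (inner ℝ α β : ℝ) := by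
  intro t _
  subst hX hX'
  simp only
  set a := Real.exp (-t) • α
  set b := Real.exp (-(T - t)) • β
  have h1 : (-a + b) = b - a := by abel
  have key : ‖-a + b‖ ^ 2 - ‖a + b‖ ^ 2 = -4 * (inner ℝ a b : ℝ) := by
    rw [h1, @norm_sub_sq_real, @norm_add_sq_real]
    rw [real_inner_comm b a]
    ring
  rw [key]
  have : (inner ℝ a b : ℝ) = Real.exp (-t) * Real.exp (-(T - t)) * (inner ℝ α β : ℝ) := by
    simp only [a, b, real_inner_smul_left, real_inner_smul_right]
    ring
  rw [this, ← Real.exp_add]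
  ring_nf
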